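/- arXiv:2306.06757 — 5 statements merged into one kernel-verified Lean document; each statement's English description precedes it below -/
import Mathlib

section
/- Let M be a symmetric invertible d×d real matrix, S ⊂ ℝ^d a smooth hypersurface with unit normal field n, and assume ⟨M n(q), n(q)⟩ ≠ 0 on S. Define ν(q) = (1/⟨M n(q), n(q)⟩) M n(q). Then for every q ∈ S and all tangent vectors x, y ∈ T_q S, one has ⟨dν_q(x), dn_q(y)⟩ = ⟨dν_q(y), dn_q(x)⟩. -/
open RealInnerProductSpace

/-- Lemma 28: Let `M` be a symmetric invertible endomorphism of `ℝ^d`,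
`S` a smooth hypersurface (given by a local parametrization `r` with unit normal
field `n`) such that `⟪M n, n⟫ ≠ 0`, and `ν = ⟪M n, n⟫⁻¹ • M n`. Then
`⟪dν(x), dn(y)⟫ = ⟪dν(y), dn(x)⟫` for all tangent directions `x, y`: every
space-time hypersurface is `L`-symmetric. -/
theorem pseudoEuclidean_L_symmetric
    (d : ℕ) (hd : 3 ≤ d)
    (M : EuclideanSpace ℝ (Fin d) →L[ℝ] EuclideanSpace ℝ (Fin d))
    (hMsym : ∀ x y : EuclideanSpace ℝ (Fin d), ⟪M x, y⟫ = ⟪x, M y⟫)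
    (hMinv : Function.Bijective M)
    -- a local parametrization of the hypersurface `S`
    (r : EuclideanSpace ℝ (Fin (d - 1)) → EuclideanSpace ℝ (Fin d))
    (hr : ContDiff ℝ 2 r)
    (hrimm : ∀ u, Function.Injective (fderiv ℝ r u))
    -- the unit normal field along the parametrization
    (n : EuclideanSpace ℝ (Fin (d - 1)) → EuclideanSpace ℝ (Fin d))
    (hn : ContDiff ℝ 1 n)
    (hnunit : ∀ u, ‖n u‖ = 1)
    (hnnormal : ∀ u x, ⟪fderiv ℝ r u x, n u⟫ = 0)
    -- the non-degeneracy (space-time) assumption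
    (hMn : ∀ u, ⟪M (n u), n u⟫ ≠ 0)
    (ν : EuclideanSpace ℝ (Fin (d - 1)) → EuclideanSpace ℝ (Fin d))
    (hν : ν = fun u => (⟪M (n u), n u⟫)⁻¹ • M (n u)) :
    ∀ q x y, ⟪fderiv ℝ ν q x, fderiv ℝ n q y⟫ = ⟪fderiv ℝ ν q y, fderiv ℝ n q x⟫ := by
  intro q x y
  have hn' : DifferentiableAt ℝ n q := (hn.differentiable one_ne_zero).differentiableAt
  have hN : DifferentiableAt ℝ (fun u => M (n u)) q := M.differentiableAt.comp q hn'
  have hg : DifferentiableAt ℝ (fun u => ⟪M (n u), n u⟫) q := hN.inner ℝ hn'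
  have hginv : DifferentiableAt ℝ (fun u => (⟪M (n u), n u⟫)⁻¹) q := hg.inv (hMn q)
  have hNder : ∀ z, fderiv ℝ (fun u => M (n u)) q z = M (fderiv ℝ n q z) := by
    intro z
    rw [show (fun u => M (n u)) = M ∘ n from rfl,
      fderiv_comp q M.differentiableAt hn', M.fderiv]
    rfl
  have hgder : ∀ z, fderiv ℝ (fun u => ⟪M (n u), n u⟫) q z
      = 2 * ⟪M (n q), fderiv ℝ n q z⟫ := by
    intro z
    rw [fderiv_inner_apply ℝ hN hn', hNder, hMsym, real_inner_comm]
    ring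
  have hinvder : ∀ z, fderiv ℝ (fun u => (⟪M (n u), n u⟫)⁻¹) q z
      = (2 * ⟪M (n q), fderiv ℝ n q z⟫) * (-((⟪M (n q), n q⟫) ^ 2)⁻¹) := by
    intro z
    have hcomp : (fun u => (⟪M (n u), n u⟫)⁻¹)
        = Inv.inv ∘ (fun u => ⟪M (n u), n u⟫) := rfl
    rw [hcomp, fderiv_comp q (differentiableAt_inv (hMn q)) hg, fderiv_inv]
    simp only [ContinuousLinearMap.comp_apply, ContinuousLinearMap.smulRight_apply,
      ContinuousLinearMap.one_apply, ContinuousLinearMap.toSpanSingleton_apply, smul_eq_mul, hgder z]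
  have hνder : ∀ z, fderiv ℝ ν q z
      = (⟪M (n q), n q⟫)⁻¹ • M (fderiv ℝ n q z)
        + ((2 * ⟪M (n q), fderiv ℝ n q z⟫) * (-((⟪M (n q), n q⟫) ^ 2)⁻¹)) • M (n q) := by
    intro z
    rw [hν, fderiv_fun_smul hginv hN]
    simp only [ContinuousLinearMap.add_apply, ContinuousLinearMap.coe_smul',
      Pi.smul_apply, ContinuousLinearMap.smulRight_apply, hNder z, hinvder z]
  rw [hνder x, hνder y]
  have hsym : ⟪M (fderiv ℝ n q x), fderiv ℝ n q y⟫
      = ⟪M (fderiv ℝ n q y), fderiv ℝ n q x⟫ := by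
    rw [hMsym, real_inner_comm]
  simp only [inner_add_left, real_inner_smul_left]
  rw [hsym]
  ring
end

section
/- Consider the ODE (e + y² − x²)·x'·y' + (b + x·y)·x'² − (c + x·y)·y'² = 0 with constants e, b, c ∈ ℝ. Suppose x(t) = r₁ cos(t) and y(t) = r₂ cos(t + φ) with r₁, r₂ ≠ 0 and sin(φ) ≠ 0. Then (x, y) is a solution of the ODE for all t if and only if b = c, c = −r₁ r₂ cos(φ), and e = r₁² − r₂². -/
open Real

/-- Key algebraic identity: with `b = c = -r₁ r₂ cos φ`, the ODE expression
factors as `r₁ r₂ sin t sin (t+φ) (e - r₁² + r₂²)`. -/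
lemma elliptic_key (e r₁ r₂ φ t : ℝ) :
    (e + (r₂ * Real.cos (t + φ)) ^ 2 - (r₁ * Real.cos t) ^ 2)
        * (-(r₁ * Real.sin t)) * (-(r₂ * Real.sin (t + φ)))
      + (-(r₁ * r₂ * Real.cos φ) + (r₁ * Real.cos t) * (r₂ * Real.cos (t + φ)))
        * (-(r₁ * Real.sin t)) ^ 2
      - (-(r₁ * r₂ * Real.cos φ) + (r₁ * Real.cos t) * (r₂ * Real.cos (t + φ)))
        * (-(r₂ * Real.sin (t + φ))) ^ 2
    = r₁ * r₂ * Real.sin t * Real.sin (t + φ) * (e - r₁ ^ 2 + r₂ ^ 2) := by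
  rw [Real.sin_add, Real.cos_add]
  linear_combination
    (-(Real.cos φ * r₁ * r₂ ^ 3) + Real.cos φ ^ 3 * r₁ * r₂ ^ 3
      + Real.sin φ ^ 2 * Real.cos φ * r₁ * r₂ ^ 3
      - Real.cos t ^ 2 * Real.sin φ ^ 2 * Real.cos φ * r₁ * r₂ ^ 3
      - Real.sin t * Real.cos t * Real.sin φ * r₁ ^ 3 * r₂
      - Real.sin t * Real.cos t * Real.sin φ * Real.cos φ ^ 2 * r₁ * r₂ ^ 3
      + Real.sin t * Real.cos t * Real.sin φ ^ 3 * r₁ * r₂ ^ 3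
      + Real.sin t ^ 2 * Real.sin φ ^ 2 * Real.cos φ * r₁ * r₂ ^ 3)
        * Real.sin_sq_add_cos_sq t
    + (Real.cos φ * r₁ * r₂ ^ 3 - Real.cos t ^ 2 * Real.cos φ * r₁ * r₂ ^ 3
      + Real.sin t * Real.cos t * Real.sin φ * r₁ * r₂ ^ 3)
        * Real.sin_sq_add_cos_sq φ

/-- Lemma 27, elliptic case: for `x t = r₁ cos t`,
`y t = r₂ cos (t + φ)` with `r₁, r₂ ≠ 0` and `sin φ ≠ 0`, the pair `(x, y)`
solves `(e + y² − x²) x' y' + (b + x y) x'² − (c + x y) y'² = 0` for all `t`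
iff `b = c`, `c = −r₁ r₂ cos φ` and `e = r₁² − r₂²`. -/
theorem elliptic_solution_iff
    (e b c r₁ r₂ φ : ℝ) (hr₁ : r₁ ≠ 0) (hr₂ : r₂ ≠ 0) (hφ : Real.sin φ ≠ 0)
    (x y : ℝ → ℝ)
    (hx : x = fun t => r₁ * Real.cos t)
    (hy : y = fun t => r₂ * Real.cos (t + φ)) :
    (∀ t : ℝ,
        (e + y t ^ 2 - x t ^ 2) * deriv x t * deriv y t
          + (b + x t * y t) * deriv x t ^ 2
          - (c + x t * y t) * deriv y t ^ 2 = 0) ↔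
      (b = c ∧ c = -(r₁ * r₂ * Real.cos φ) ∧ e = r₁ ^ 2 - r₂ ^ 2) := by
  subst hx hy
  have hdx : ∀ s : ℝ, deriv (fun t => r₁ * Real.cos t) s = -(r₁ * Real.sin s) := by
    intro s
    have h := (Real.hasDerivAt_cos s).const_mul r₁
    simpa [mul_comm, mul_neg] using h.deriv
  have hdy : ∀ s : ℝ, deriv (fun t => r₂ * Real.cos (t + φ)) s
      = -(r₂ * Real.sin (s + φ)) := by
    intro s
    have h1 : HasDerivAt (fun t : ℝ => t + φ) 1 s := (hasDerivAt_id s).add_const φ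
    have h := ((Real.hasDerivAt_cos (s + φ)).comp s h1).const_mul r₂
    simpa [mul_comm, mul_neg] using h.deriv
  constructor
  · intro h
    -- c from t = 0
    have h0 := h 0
    rw [hdx, hdy] at h0
    simp only [Real.sin_zero, Real.cos_zero, zero_add, mul_zero, neg_zero, one_mul,
      mul_one, zero_mul, zero_pow, ne_eq, OfNat.ofNat_ne_zero, not_false_eq_true] at h0
    have hc2 : (c + r₁ * r₂ * Real.cos φ) * (r₂ * Real.sin φ) ^ 2 = 0 := by
      linear_combination -h0
    have hc : c = -(r₁ * r₂ * Real.cos φ) := by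
      have h3 := (mul_eq_zero.mp hc2).resolve_right
        (pow_ne_zero 2 (mul_ne_zero hr₂ hφ))
      linarith
    -- b from t = -φ
    have hm := h (-φ)
    rw [hdx, hdy] at hm
    simp only [neg_add_cancel, Real.sin_zero, mul_zero, neg_zero, Real.sin_neg,
      Real.cos_neg, Real.cos_zero, mul_one, zero_pow, ne_eq, OfNat.ofNat_ne_zero,
      not_false_eq_true, mul_zero, zero_mul] at hm
    have hb2 : (b + r₁ * r₂ * Real.cos φ) * (r₁ * Real.sin φ) ^ 2 = 0 := by
      linear_combination hm
    have hb : b = -(r₁ * r₂ * Real.cos φ) := by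
      have h3 := (mul_eq_zero.mp hb2).resolve_right
        (pow_ne_zero 2 (mul_ne_zero hr₁ hφ))
      linarith
    -- e from t = -φ/2 and t = π/2 - φ/2
    have h₁ : r₁ * r₂ * Real.sin (-(φ/2)) * Real.sin (-(φ/2) + φ)
        * (e - r₁ ^ 2 + r₂ ^ 2) = 0 := by
      have ht := h (-(φ/2))
      rw [hdx, hdy, hb, hc] at ht
      linear_combination ht - elliptic_key e r₁ r₂ φ (-(φ/2))
    have h₂ : r₁ * r₂ * Real.sin (Real.pi/2 - φ/2) * Real.sin ((Real.pi/2 - φ/2) + φ)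
        * (e - r₁ ^ 2 + r₂ ^ 2) = 0 := by
      have ht := h (Real.pi/2 - φ/2)
      rw [hdx, hdy, hb, hc] at ht
      linear_combination ht - elliptic_key e r₁ r₂ φ (Real.pi/2 - φ/2)
    rw [Real.sin_neg, show -(φ/2) + φ = φ/2 by ring] at h₁
    rw [Real.sin_pi_div_two_sub, show (Real.pi/2 - φ/2) + φ = φ/2 + Real.pi/2 by ring,
      Real.sin_add_pi_div_two] at h₂
    have hK : r₁ * r₂ * (e - r₁ ^ 2 + r₂ ^ 2) = 0 := by
      linear_combination h₂ - h₁
        - r₁ * r₂ * (e - r₁ ^ 2 + r₂ ^ 2) * Real.sin_sq_add_cos_sq (φ/2)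
    have hK' := (mul_eq_zero.mp hK).resolve_left (mul_ne_zero hr₁ hr₂)
    exact ⟨hb.trans hc.symm, hc, by linarith⟩
  · rintro ⟨hb, hc, he⟩
    subst hb hc he
    intro t
    rw [hdx, hdy]
    linear_combination elliptic_key (r₁ ^ 2 - r₂ ^ 2) r₁ r₂ φ t
end

section
/- Let e, b, c ∈ ℝ with b = c, and let r₁, r₂, φ ∈ ℝ satisfy r₁ r₂ ≠ 0, sin φ ≠ 0, c = −r₁ r₂ cos φ and e = r₁² − r₂². Then the curve γ(t) = (r₁ cos t, r₂ cos(t + φ)) satisfies, for every t, the equation (e + y(t)² − x(t)²) x'(t) y'(t) + (b + x(t) y(t)) x'(t)² − (c + x(t) y(t)) y'(t)² = 0. -/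
/-- Lemma 27, 'if' direction, elliptic case: if `b = c`,
`c = −r₁ r₂ cos φ` and `e = r₁² − r₂²` (with `r₁ r₂ ≠ 0`, `sin φ ≠ 0`), then
`γ(t) = (r₁ cos t, r₂ cos (t + φ))` is an integral curve of the ODE. -/
theorem ellipse_is_solution
    (e b c r₁ r₂ φ : ℝ) (hr : r₁ * r₂ ≠ 0) (hφ : Real.sin φ ≠ 0)
    (hbc : b = c) (hc : c = -(r₁ * r₂ * Real.cos φ)) (he : e = r₁ ^ 2 - r₂ ^ 2)
    (x y : ℝ → ℝ)
    (hx : x = fun t => r₁ * Real.cos t)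
    (hy : y = fun t => r₂ * Real.cos (t + φ)) :
    ∀ t : ℝ,
      (e + y t ^ 2 - x t ^ 2) * deriv x t * deriv y t
        + (b + x t * y t) * deriv x t ^ 2
        - (c + x t * y t) * deriv y t ^ 2 = 0 := by
  intro t
  have dx : deriv x t = -(r₁ * Real.sin t) := by
    subst hx
    have : HasDerivAt (fun t : ℝ => r₁ * Real.cos t) (r₁ * (-Real.sin t)) t :=
      (Real.hasDerivAt_cos t).const_mul r₁
    rw [this.deriv]; ring
  have dy : deriv y t = -(r₂ * Real.sin (t + φ)) := by
    subst hy
    have h1 : HasDerivAt (fun t : ℝ => t + φ) 1 t := by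
      simpa using (hasDerivAt_id t).add_const φ
    have h2 : HasDerivAt (fun t : ℝ => Real.cos (t + φ)) (-Real.sin (t + φ) * 1) t :=
      by have := (Real.hasDerivAt_cos (t + φ)).comp t h1; exact this
    rw [((h2.const_mul r₂).deriv)]; ring
  subst hx hy hbc hc he
  rw [dx, dy]
  simp only [Real.cos_add, Real.sin_add]
  set st := Real.sin t
  set ct := Real.cos t
  set sp := Real.sin φ
  set cp := Real.cos φ
  have h1 : st ^ 2 + ct ^ 2 = 1 := Real.sin_sq_add_cos_sq t
  have h2 : sp ^ 2 + cp ^ 2 = 1 := Real.sin_sq_add_cos_sq φ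
  linear_combination
    (-(cp * r₁ * r₂ ^ 3) + cp ^ 3 * r₁ * r₂ ^ 3 + sp ^ 2 * cp * r₁ * r₂ ^ 3
      - ct ^ 2 * sp ^ 2 * cp * r₁ * r₂ ^ 3 - st * ct * sp * r₁ ^ 3 * r₂
      - st * ct * sp * cp ^ 2 * r₁ * r₂ ^ 3 + st * ct * sp ^ 3 * r₁ * r₂ ^ 3
      + st ^ 2 * sp ^ 2 * cp * r₁ * r₂ ^ 3) * h1
    + (cp * r₁ * r₂ ^ 3 - ct ^ 2 * cp * r₁ * r₂ ^ 3 + st * ct * sp * r₁ * r₂ ^ 3) * h2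
end

section
/- Let e, b, c ∈ ℝ with b = c, and let r₁, r₂, φ ∈ ℝ satisfy r₁ r₂ ≠ 0, φ ≠ 0, c = −r₁ r₂ cosh φ and e = r₁² − r₂². Then the curve γ(t) = (r₁ cosh t, r₂ cosh(t + φ)) satisfies, for every t, (e + y² − x²) x' y' + (b + x y) x'² − (c + x y) y'² = 0. -/
/-- Lemma 27, hyperbolic case: if `b = c`, `c = −r₁ r₂ cosh φ` and
`e = r₁² − r₂²` (with `r₁ r₂ ≠ 0`, `φ ≠ 0`), then
`γ(t) = (r₁ cosh t, r₂ cosh (t + φ))` is an integral curve of the ODE. -/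
theorem hyperbola_is_solution
    (e b c r₁ r₂ φ : ℝ) (hr : r₁ * r₂ ≠ 0) (hφ : φ ≠ 0)
    (hbc : b = c) (hc : c = -(r₁ * r₂ * Real.cosh φ)) (he : e = r₁ ^ 2 - r₂ ^ 2)
    (x y : ℝ → ℝ)
    (hx : x = fun t => r₁ * Real.cosh t)
    (hy : y = fun t => r₂ * Real.cosh (t + φ)) :
    ∀ t : ℝ,
      (e + y t ^ 2 - x t ^ 2) * deriv x t * deriv y t
        + (b + x t * y t) * deriv x t ^ 2
        - (c + x t * y t) * deriv y t ^ 2 = 0 := by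
  intro t
  have hdx : deriv x t = r₁ * Real.sinh t := by
    subst hx; simp
  have hdy : deriv y t = r₂ * Real.sinh (t + φ) := by
    subst hy
    have h1 : HasDerivAt (fun t : ℝ => t + φ) 1 t := (hasDerivAt_id t).add_const φ
    have h2 : HasDerivAt (fun t => r₂ * Real.cosh (t + φ))
        (r₂ * (Real.sinh (t + φ) * 1)) t :=
      by have h := ((Real.hasDerivAt_cosh (t + φ)).comp t h1).const_mul r₂; exact h
    simpa using h2.deriv
  subst hx hy hbc hc he
  simp only [hdx, hdy]
  have hc1 : Real.cosh t ^ 2 = Real.sinh t ^ 2 + 1 := Real.cosh_sq t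
  have hc2 : Real.cosh (t + φ) ^ 2 = Real.sinh (t + φ) ^ 2 + 1 := Real.cosh_sq (t + φ)
  have h3 : Real.cosh t * Real.cosh (t + φ) - Real.sinh t * Real.sinh (t + φ)
      = Real.cosh φ := by
    rw [Real.cosh_add, Real.sinh_add]
    linear_combination Real.cosh φ * hc1
  linear_combination
    (-(r₁ * r₂) * (r₂ ^ 2 * Real.sinh (t + φ) ^ 2 - r₁ ^ 2 * Real.sinh t ^ 2)) * h3
    + (-(r₁ ^ 3 * r₂ * Real.sinh t * Real.sinh (t + φ))) * hc1
    + (r₁ * r₂ ^ 3 * Real.sinh t * Real.sinh (t + φ)) * hc2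
end

section
/- Let K₁ = r₁ r₂³ sin²φ cos φ + c r₂² sin²φ, K₂ = b r₁² + e r₁ r₂ cos φ − c r₂² cos²φ + r₁ r₂³ sin²φ cos φ, K₃ = e r₁ r₂ sin φ − r₁³ r₂ sin φ − 2 c r₂² sin φ cos φ − r₁ r₂³ sin φ (cos²φ − sin²φ), with r₁, r₂ ≠ 0 and sin φ ≠ 0. Then K₁ = K₂ = K₃ = 0 if and only if c = −r₁ r₂ cos φ, e = r₁² − r₂², and (b − c)(r₂² + e) = 0. -/
/-- system (14): with `r₁, r₂ ≠ 0` and `sin φ ≠ 0`, the system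
`K₁ = K₂ = K₃ = 0` is equivalent to `c = −r₁ r₂ cos φ`, `e = r₁² − r₂²` and
`(b − c)(r₂² + e) = 0`. -/
theorem system_K_iff
    (b c e r₁ r₂ φ : ℝ) (hr₁ : r₁ ≠ 0) (hr₂ : r₂ ≠ 0) (hφ : Real.sin φ ≠ 0)
    (K₁ K₂ K₃ : ℝ)
    (hK₁ : K₁ = r₁ * r₂ ^ 3 * Real.sin φ ^ 2 * Real.cos φ + c * r₂ ^ 2 * Real.sin φ ^ 2)
    (hK₂ : K₂ = b * r₁ ^ 2 + e * r₁ * r₂ * Real.cos φ - c * r₂ ^ 2 * Real.cos φ ^ 2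
        + r₁ * r₂ ^ 3 * Real.sin φ ^ 2 * Real.cos φ)
    (hK₃ : K₃ = e * r₁ * r₂ * Real.sin φ - r₁ ^ 3 * r₂ * Real.sin φ
        - 2 * c * r₂ ^ 2 * Real.sin φ * Real.cos φ
        - r₁ * r₂ ^ 3 * Real.sin φ * (Real.cos φ ^ 2 - Real.sin φ ^ 2)) :
    (K₁ = 0 ∧ K₂ = 0 ∧ K₃ = 0) ↔
      (c = -(r₁ * r₂ * Real.cos φ) ∧ e = r₁ ^ 2 - r₂ ^ 2 ∧ (b - c) * (r₂ ^ 2 + e) = 0) := by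
  have pyth : Real.sin φ ^ 2 + Real.cos φ ^ 2 = 1 := Real.sin_sq_add_cos_sq φ
  set s := Real.sin φ
  set co := Real.cos φ
  subst hK₁ hK₂ hK₃
  constructor
  · rintro ⟨h1, h2, h3⟩
    have hc : c = -(r₁ * r₂ * co) := by
      have h : (c + r₁ * r₂ * co) * (r₂ ^ 2 * s ^ 2) = 0 := by linear_combination h1
      rcases mul_eq_zero.1 h with h | h
      · linarith
      · exact absurd h (by positivity)
    subst hc
    have he : e = r₁ ^ 2 - r₂ ^ 2 := by
      have h : (e - r₁ ^ 2 + r₂ ^ 2) * (r₁ * r₂ * s) = 0 := by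
        linear_combination h3 - (r₁ * r₂ ^ 3 * s) * pyth
      rcases mul_eq_zero.1 h with h | h
      · linarith
      · exact absurd h (by
          simp only [mul_eq_zero, not_or]
          exact ⟨⟨hr₁, hr₂⟩, hφ⟩)
    subst he
    refine ⟨rfl, rfl, ?_⟩
    linear_combination h2 - (r₁ * r₂ ^ 3 * co) * pyth
  · rintro ⟨hc, he, hbc⟩
    subst hc he
    refine ⟨by ring, ?_, ?_⟩
    · linear_combination hbc + (r₁ * r₂ ^ 3 * co) * pyth
    · linear_combination (r₁ * r₂ ^ 3 * s) * pyth
end
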